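/- Let n ≥ 1, a ≥ 0, and let φ : ℝ → ℝ satisfy F(φ(t)) e^{φ(t)} = e^{nt}/n + F(a) e^a with φ(t) > a, where F(s) = ∑_{r=0}^{n-1} (-1)^{n-r-1} ((n-1)!/r!) s^r. Then as t → +∞, φ(t) = n t − (n−1) log t − n log n + O((log t)/t); in particular φ(t)/t → n as t → ∞. -/

import Mathlib

open Real Finset Filter Asymptotics

lemma abs_log_le_two_mul {x : ℝ} (hx : 1/2 ≤ x) : |Real.log x| ≤ 2 * |x - 1| := by
  have hx0 : 0 < x := by linarith
  rcases le_total 1 x with h | h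
  · rw [abs_of_nonneg (Real.log_nonneg h), abs_of_nonneg (by linarith)]
    have := Real.log_le_sub_one_of_pos hx0; linarith
  · rw [abs_of_nonpos (Real.log_nonpos hx0.le h), abs_of_nonpos (by linarith)]
    have h1 : Real.log x⁻¹ ≤ x⁻¹ - 1 := Real.log_le_sub_one_of_pos (by positivity)
    rw [Real.log_inv] at h1
    have hxi : x * x⁻¹ = 1 := mul_inv_cancel₀ hx0.ne'
    nlinarith [h1, hxi]

set_option maxHeartbeats 1000000 in
theorem stmt_7 (n : ℕ) (hn : 1 ≤ n) (a : ℝ) (ha : 0 ≤ a)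
    (F : ℝ → ℝ)
    (hF : ∀ x : ℝ, F x = ∑ r ∈ Finset.range n,
      (-1 : ℝ) ^ (n - r - 1) * ((Nat.factorial (n - 1) : ℝ) / (Nat.factorial r : ℝ)) * x ^ r)
    (φ : ℝ → ℝ) (hφa : ∀ t, a < φ t)
    (hφeq : ∀ t, F (φ t) * Real.exp (φ t) = Real.exp (n * t) / n + F a * Real.exp a) :
    (fun t => φ t - ((n : ℝ) * t - ((n : ℝ) - 1) * Real.log t - (n : ℝ) * Real.log n))
      =O[atTop] (fun t => Real.log t / t) ∧
    Filter.Tendsto (fun t => φ t / t) atTop (nhds (n : ℝ)) := by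
  obtain ⟨m, rfl⟩ : ∃ m, n = m + 1 := ⟨n - 1, (Nat.succ_pred_eq_of_pos hn).symm⟩
  clear hn
  set nR : ℝ := ((m : ℝ) + 1) with hnR
  clear_value nR
  have hcast : ((m + 1 : ℕ) : ℝ) = nR := by push_cast [hnR]; ring
  have hN1 : (1:ℝ) ≤ nR := by rw [hnR]; have : (0:ℝ) ≤ (m:ℝ) := Nat.cast_nonneg m; linarith
  have hN0 : (0:ℝ) < nR := by linarith
  -- decomposition of F
  have hFsub : ∀ s : ℝ, F s = (∑ r ∈ Finset.range m,
      ((-1:ℝ)^(m - r) * ((m.factorial:ℝ)/(r.factorial:ℝ)) * s^r)) + s^m := by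
    intro s
    rw [hF s, Finset.sum_range_succ]
    congr 1
    · refine Finset.sum_congr rfl fun r _ => ?_
      have h1 : m + 1 - r - 1 = m - r := by omega
      have h2 : m + 1 - 1 = m := by omega
      rw [h1, h2]
    · have h1 : m + 1 - m - 1 = 0 := by omega
      have h2 : m + 1 - 1 = m := by omega
      rw [h1, h2, pow_zero, div_self (by exact_mod_cast m.factorial_pos.ne'), one_mul, one_mul]
  set K : ℝ := ((m+1).factorial : ℝ) with hK
  clear_value K
  have hK1 : (1:ℝ) ≤ K := by
    rw [hK]; exact_mod_cast Nat.one_le_iff_ne_zero.2 (m+1).factorial_pos.ne'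
  have hK0 : (0:ℝ) < K := by linarith
  -- polynomial bound
  have hFbd : ∀ s : ℝ, 1 ≤ s → |F s - s^m| * s ≤ K * s^m := by
    intro s hs
    have hs0 : 0 < s := lt_of_lt_of_le one_pos hs
    have hmf0 : (0:ℝ) < (m.factorial:ℝ) := by exact_mod_cast m.factorial_pos
    have h0 : F s - s^m = ∑ r ∈ Finset.range m,
        ((-1:ℝ)^(m - r) * ((m.factorial:ℝ)/(r.factorial:ℝ)) * s^r) := by
      rw [hFsub s]; ring
    have habs : |F s - s^m| * s = |(∑ r ∈ Finset.range m,
        ((-1:ℝ)^(m - r) * ((m.factorial:ℝ)/(r.factorial:ℝ)) * s^r)) * s| := by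
      rw [h0, abs_mul, abs_of_pos hs0]
    rw [habs, Finset.sum_mul]
    calc |∑ r ∈ Finset.range m, (-1:ℝ)^(m - r) * ((m.factorial:ℝ)/(r.factorial:ℝ)) * s^r * s|
        ≤ ∑ r ∈ Finset.range m, |(-1:ℝ)^(m - r) * ((m.factorial:ℝ)/(r.factorial:ℝ)) * s^r * s| :=
          Finset.abs_sum_le_sum_abs _ _
      _ ≤ ∑ r ∈ Finset.range m, (m.factorial:ℝ) * s^m := by
          refine Finset.sum_le_sum fun r hr => ?_
          rw [Finset.mem_range] at hr
          have h1 : |(-1:ℝ)^(m - r) * ((m.factorial:ℝ)/(r.factorial:ℝ)) * s^r * s|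
              = ((m.factorial:ℝ)/(r.factorial:ℝ)) * s^(r+1) := by
            rw [abs_mul, abs_mul, abs_mul, abs_pow, abs_neg, abs_one, one_pow, one_mul,
              abs_of_pos hs0, abs_of_nonneg (by positivity : (0:ℝ) ≤ (m.factorial:ℝ)/(r.factorial:ℝ)),
              abs_of_pos (pow_pos hs0 r), pow_succ]
            ring
          rw [h1]
          have h2 : ((m.factorial:ℝ)/(r.factorial:ℝ)) ≤ (m.factorial:ℝ) :=
            div_le_self (by positivity)
              (by exact_mod_cast Nat.one_le_iff_ne_zero.2 r.factorial_pos.ne')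
          have h3 : s^(r+1) ≤ s^m := pow_le_pow_right₀ hs (by omega)
          have h4 : (0:ℝ) < s^(r+1) := pow_pos hs0 _
          nlinarith [pow_pos hs0 m]
      _ = (m:ℝ) * ((m.factorial:ℝ) * s^m) := by
          rw [Finset.sum_const, Finset.card_range, nsmul_eq_mul]
      _ ≤ K * s^m := by
          have h5 : (m:ℝ) * (m.factorial:ℝ) ≤ K := by
            rw [hK]
            push_cast [Nat.factorial_succ]
            nlinarith
          nlinarith [pow_pos hs0 m]
  -- continuity of F
  have hFc : Continuous F := by
    have : F = fun x => ∑ r ∈ Finset.range (m+1),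
        (-1 : ℝ) ^ (m + 1 - r - 1) * ((Nat.factorial (m + 1 - 1) : ℝ) / (Nat.factorial r : ℝ)) * x ^ r :=
      funext hF
    rw [this]
    exact continuous_finset_sum _ fun r _ => by fun_prop
  set C : ℝ := F a * Real.exp a with hCdef
  clear_value C
  have hφeq' : ∀ t, F (φ t) * Real.exp (φ t) = Real.exp (nR * t) / nR + C := by
    intro t; rw [hφeq t, hcast, hCdef]
  clear hφeq
  -- stage 1 : eventual largeness of φ
  have htendE : Tendsto (fun t => Real.exp (nR * t) / nR) atTop atTop := by
    apply Tendsto.atTop_div_const hN0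
    exact Real.tendsto_exp_atTop.comp (tendsto_id.const_mul_atTop hN0)
  set M1 : ℝ := max a (max (2*K) 1) with hM1
  clear_value M1
  have hM1a : a ≤ M1 := by rw [hM1]; exact le_max_left _ _
  have hM1b : 1 ≤ M1 := by rw [hM1]; exact le_trans (le_max_right _ _) (le_max_right _ _)
  have hM1c : 2*K ≤ M1 := by rw [hM1]; exact le_trans (le_max_left _ _) (le_max_right _ _)
  obtain ⟨x0, hx0mem, hx0⟩ := IsCompact.exists_isMaxOn (isCompact_Icc (a := a) (b := M1))
    ⟨a, Set.left_mem_Icc.2 hM1a⟩ (hFc.mul Real.continuous_exp).continuousOn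
  set B : ℝ := F x0 * Real.exp x0 with hB
  clear_value B
  have hE1 : ∀ᶠ t in atTop, M1 < φ t := by
    have h := (tendsto_atTop_add_const_right atTop C htendE).eventually_gt_atTop B
    filter_upwards [h] with t ht
    by_contra hle
    push_neg at hle
    have hmem : φ t ∈ Set.Icc a M1 := ⟨(hφa t).le, hle⟩
    have h2 := hx0 hmem
    simp only [Set.mem_setOf_eq, Pi.mul_apply] at h2
    rw [hφeq' t] at h2
    linarith only [ht, h2, hB]
  -- further eventual bounds
  have hE2 : ∀ᶠ t in atTop, 2*(|C|+1) ≤ Real.exp (nR * t) / nR :=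
    htendE.eventually_ge_atTop _
  have hlito := Real.isLittleO_log_id_atTop
  have hE4 : ∀ᶠ t in atTop, ‖(3*(m:ℝ)) * Real.log t‖ ≤ 1/2 * ‖t‖ :=
    Asymptotics.IsLittleO.def (hlito.const_mul_left (3*(m:ℝ))) (by norm_num)
  set C2 : ℝ := Real.log nR + 2 + 3*(m:ℝ) with hC2
  clear_value C2
  have hlognR : (0:ℝ) ≤ Real.log nR := Real.log_nonneg hN1
  have hC2pos : 0 < C2 := by
    have hm0 : (0:ℝ) ≤ (m:ℝ) := Nat.cast_nonneg m
    rw [hC2]; linarith only [hm0, hlognR]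
  have hE6 : ∀ᶠ t in atTop, ‖C2 * Real.log t‖ ≤ nR/2 * ‖t‖ :=
    Asymptotics.IsLittleO.def (hlito.const_mul_left C2) (by linarith only [hN0])
  set C1 : ℝ := 2*nR*|C| + 8*K with hC1
  clear_value C1
  have hC1nn : (0:ℝ) ≤ C1 := by
    rw [hC1]
    have h9 := mul_nonneg (mul_nonneg (by norm_num : (0:ℝ) ≤ 2) hN0.le) (abs_nonneg C)
    linarith only [h9, hK0]
  set Cf : ℝ := C1 + 2*(m:ℝ)*C2 with hCf
  clear_value Cf
  -- master pointwise estimate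
  have hmain : ∀ᶠ t in atTop,
      |φ t - (nR * t - (m:ℝ) * Real.log t - nR * Real.log nR)| ≤ Cf * (Real.log t / t)
      ∧ 1 ≤ Real.log t ∧ 0 < t := by
    filter_upwards [hE1, hE2, hE4, hE6, eventually_ge_atTop (Real.exp 1),
      eventually_ge_atTop (2:ℝ), eventually_ge_atTop nR,
      eventually_ge_atTop (4*(Real.log nR + 2))] with t h1 h2 h4 h6 he h2t hnt hlogt
    have ht0 : (0:ℝ) < t := lt_of_lt_of_le (by norm_num) h2t
    have ht1 : (1:ℝ) ≤ t := by linarith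
    have hlt1 : (1:ℝ) ≤ Real.log t := (Real.le_log_iff_exp_le ht0).2 he
    refine ⟨?_, hlt1, ht0⟩
    have hφ1 : 1 ≤ φ t := by linarith only [hM1b, h1]
    have hφK : 2*K ≤ φ t := by linarith only [hM1c, h1]
    have hφ0 : (0:ℝ) < φ t := by linarith only [hφ1]
    have hm0 : (0:ℝ) ≤ (m:ℝ) := Nat.cast_nonneg m
    set P : ℝ := (φ t)^m with hP
    clear_value P
    have hP0 : (0:ℝ) < P := by rw [hP]; exact pow_pos hφ0 m
    have hP1 : (1:ℝ) ≤ P := by rw [hP]; exact one_le_pow₀ hφ1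
    have hFd := hFbd (φ t) hφ1
    rw [← hP] at hFd
    set u : ℝ := F (φ t) / P with hu
    clear_value u
    have hu1 : |u - 1| ≤ K / φ t := by
      rw [hu]
      have h7 : F (φ t) / P - 1 = (F (φ t) - P) / P := by field_simp [hP0.ne']
      rw [h7, abs_div, abs_of_pos hP0, div_le_div_iff₀ hP0 hφ0]
      linarith only [hFd]
    have hKφ : K / φ t ≤ 1/2 := by
      rw [div_le_iff₀ hφ0]; linarith only [hφK, hK0]
    have huhalf : 1/2 ≤ u := by
      obtain ⟨ha', hb'⟩ := abs_le.1 hu1; linarith only [ha', hb', hKφ]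
    have hu0 : 0 < u := by linarith only [huhalf]
    have hFP : F (φ t) = P * u := by rw [hu]; field_simp [hP0.ne']
    have hFφpos : 0 < F (φ t) := by rw [hFP]; exact mul_pos hP0 hu0
    set E : ℝ := Real.exp (nR * t) with hE
    clear_value E
    have hEpos : 0 < E := by rw [hE]; exact Real.exp_pos _
    have hEnC : 2*(|C|+1) * nR ≤ E := by
      have h9 := (le_div_iff₀ hN0).1 h2; linarith only [h9]
    set x : ℝ := nR * C / E with hx
    clear_value x
    have hxabs : |x| ≤ 1/2 := by
      rw [hx, abs_div, abs_of_pos hEpos, abs_mul, abs_of_pos hN0, div_le_iff₀ hEpos]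
      have hx1 : 2*(|C|+1)*nR = 2*(|C| * nR) + 2*nR := by ring
      linarith only [hEnC, hx1, hN0]
    have h1x : 1/2 ≤ 1 + x := by
      obtain ⟨ha', hb'⟩ := abs_le.1 hxabs; linarith only [ha', hb']
    have h1x0 : 0 < 1 + x := by linarith only [h1x]
    have heqn : F (φ t) * Real.exp (φ t) = (E / nR) * (1 + x) := by
      rw [hφeq' t, hx, ← hE]; field_simp [hEpos.ne', hN0.ne']
    have hkey : φ t + (m:ℝ) * Real.log (φ t) =
        nR * t - Real.log nR + (Real.log (1+x) - Real.log u) := by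
      have hL : Real.log (F (φ t) * Real.exp (φ t))
          = (m:ℝ) * Real.log (φ t) + Real.log u + φ t := by
        rw [Real.log_mul hFφpos.ne' (Real.exp_ne_zero _), Real.log_exp, hFP,
          Real.log_mul hP0.ne' hu0.ne', hP, Real.log_pow]
      have hR : Real.log ((E / nR) * (1 + x)) = nR * t - Real.log nR + Real.log (1+x) := by
        rw [Real.log_mul (div_pos hEpos hN0).ne' h1x0.ne', Real.log_div hEpos.ne' hN0.ne', hE,
          Real.log_exp]
      rw [heqn] at hL
      rw [hR] at hL
      linarith only [hL]
    set r : ℝ := Real.log (1+x) - Real.log u with hr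
    clear_value r
    have hlog1x : |Real.log (1+x)| ≤ 2 * |x| := by
      have := abs_log_le_two_mul h1x
      simpa using this
    have hlogu : |Real.log u| ≤ 2 * (K / φ t) := by
      have h7 := abs_log_le_two_mul huhalf
      calc |Real.log u| ≤ 2 * |u - 1| := h7
        _ ≤ 2 * (K / φ t) := by linarith only [hu1]
    have hr2 : |r| ≤ 2 := by
      calc |r| = |Real.log (1+x) - Real.log u| := by rw [hr]
        _ ≤ |Real.log (1+x)| + |Real.log u| := abs_sub _ _
        _ ≤ 2 * |x| + 2 * (K / φ t) := by linarith only [hlog1x, hlogu]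
        _ ≤ 2 := by linarith only [hxabs, hKφ]
    have hrle := abs_le.1 hr2
    have hlogφ0 : 0 ≤ Real.log (φ t) := Real.log_nonneg hφ1
    have hupper : φ t ≤ nR * t + 2 := by
      linarith only [hkey, hrle.2, mul_nonneg hm0 hlogφ0, hlognR]
    have hlogφle : Real.log (φ t) ≤ Real.log (nR*t+2) := Real.log_le_log hφ0 hupper
    have hnt2 : nR * t + 2 ≤ t^3 := by
      have h9 : nR*t ≤ t*t := mul_le_mul_of_nonneg_right hnt ht0.le
      have h10 : (2:ℝ)*2 ≤ t*t := mul_le_mul h2t h2t (by norm_num) ht0.le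
      have h11 : 2*(t*t) ≤ t*(t*t) := mul_le_mul_of_nonneg_right h2t (mul_nonneg ht0.le ht0.le)
      have h12 : t*(t*t) = t^3 := by ring
      linarith only [h9, h10, h11, h12]
    have hlog3 : Real.log (nR*t+2) ≤ 3 * Real.log t := by
      calc Real.log (nR*t+2) ≤ Real.log (t^3) :=
            Real.log_le_log (by linarith only [mul_pos hN0 ht0]) hnt2
        _ = 3 * Real.log t := by rw [Real.log_pow]; norm_num
    have h4' : 3*(m:ℝ) * Real.log t ≤ t/2 := by
      rw [Real.norm_eq_abs, Real.norm_eq_abs] at h4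
      calc 3*(m:ℝ) * Real.log t ≤ |3*(m:ℝ) * Real.log t| := le_abs_self _
        _ ≤ 1/2 * |t| := h4
        _ = t/2 := by rw [abs_of_pos ht0]; ring
    have hmlog3 : (m:ℝ) * Real.log (φ t) ≤ 3*(m:ℝ) * Real.log t := by
      have h9 := mul_le_mul_of_nonneg_left (hlogφle.trans hlog3) hm0
      linarith only [h9]
    have hmlogφ : (m:ℝ) * Real.log (φ t) ≤ t/2 := le_trans hmlog3 h4'
    have hntt : t ≤ nR * t := by
      have h9 : 1*t ≤ nR*t := mul_le_mul_of_nonneg_right hN1 ht0.le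
      linarith only [h9]
    have hlower : t/4 ≤ φ t := by
      linarith only [hkey, hrle.1, hmlogφ, hntt, hlogt]
    have ht4 : 0 < t/4 := by linarith only [ht0]
    -- refined bound on r
    have hxsmall : |x| ≤ nR * |C| / t := by
      rw [hx, abs_div, abs_of_pos hEpos, abs_mul, abs_of_pos hN0]
      have het : t ≤ E := by
        have ha1 : t + 1 ≤ Real.exp t := Real.add_one_le_exp t
        have ha2 : Real.exp t ≤ E := by
          rw [hE]; apply Real.exp_le_exp.2; linarith only [hntt]
        linarith only [ha1, ha2]
      exact div_le_div_of_nonneg_left (mul_nonneg hN0.le (abs_nonneg C)) ht0 het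
    have hrfine : |r| ≤ C1 / t := by
      have hKφ4 : K / φ t ≤ 4 * K / t := by
        rw [div_le_div_iff₀ hφ0 ht0]
        have h9 : K*(t/4) ≤ K*(φ t) := mul_le_mul_of_nonneg_left hlower hK0.le
        linarith only [h9]
      have hA : |Real.log (1+x)| ≤ 2 * (nR * |C| / t) := le_trans hlog1x (by linarith only [hxsmall])
      have hB2 : |Real.log u| ≤ 2 * (4 * K / t) := le_trans hlogu (by linarith only [hKφ4])
      calc |r| = |Real.log (1+x) - Real.log u| := by rw [hr]
        _ ≤ |Real.log (1+x)| + |Real.log u| := abs_sub _ _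
        _ ≤ 2 * (nR * |C| / t) + 2 * (4 * K / t) := by linarith only [hA, hB2]
        _ = C1 / t := by rw [hC1]; field_simp; ring
    -- |φ - nR t| ≤ C2 log t
    have habsd : |φ t - nR * t| ≤ C2 * Real.log t := by
      rw [abs_le]
      constructor
      · rw [hC2]
        linarith only [hkey, hrle.1, hmlog3, mul_le_mul_of_nonneg_left hlt1 hlognR, hlt1]
      · rw [hC2]
        linarith only [hkey, hrle.2, mul_nonneg hm0 hlogφ0,
          mul_le_mul_of_nonneg_left hlt1 hlognR, mul_nonneg hm0 (le_trans zero_le_one hlt1),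
          mul_nonneg hlognR (le_trans zero_le_one hlt1), hlt1, hlognR]
    -- y = φ/(nR t)
    set y : ℝ := φ t / (nR * t) with hy
    clear_value y
    have hnt0 : 0 < nR * t := mul_pos hN0 ht0
    have hy1 : |y - 1| ≤ C2 * Real.log t / (nR * t) := by
      rw [hy]
      have h7 : φ t / (nR*t) - 1 = (φ t - nR*t) / (nR*t) := by field_simp [hnt0.ne']
      rw [h7, abs_div, abs_of_pos hnt0]
      exact (div_le_div_iff_of_pos_right hnt0).mpr habsd
    have h6' : C2 * Real.log t ≤ nR/2 * t := by
      rw [Real.norm_eq_abs, Real.norm_eq_abs] at h6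
      calc C2 * Real.log t ≤ |C2 * Real.log t| := le_abs_self _
        _ ≤ nR/2 * |t| := h6
        _ = nR/2 * t := by rw [abs_of_pos ht0]
    have hyhalf : 1/2 ≤ y := by
      have h7 : C2 * Real.log t / (nR * t) ≤ 1/2 := by
        rw [div_le_iff₀ hnt0]; linarith only [h6']
      obtain ⟨ha', hb'⟩ := abs_le.1 hy1
      linarith only [ha', hb', h7]
    have hlognn : (0:ℝ) ≤ Real.log t := by linarith only [hlt1]
    have hlogy : |Real.log y| ≤ 2 * C2 * Real.log t / t := by
      calc |Real.log y| ≤ 2 * |y - 1| := abs_log_le_two_mul hyhalf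
        _ ≤ 2 * (C2 * Real.log t / (nR * t)) := by linarith only [hy1]
        _ = (2 * C2 * Real.log t) / (nR * t) := by ring
        _ ≤ (2 * C2 * Real.log t) / t := by
            have h9 : (0:ℝ) ≤ 2 * C2 * Real.log t :=
              mul_nonneg (mul_nonneg (by norm_num) hC2pos.le) hlognn
            exact div_le_div_of_nonneg_left h9 ht0 hntt
        _ = 2 * C2 * Real.log t / t := rfl
    -- final
    have hDval : φ t - (nR * t - (m:ℝ) * Real.log t - nR * Real.log nR)
        = r - (m:ℝ) * Real.log y := by
      have hly : Real.log y = Real.log (φ t) - Real.log nR - Real.log t := by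
        rw [hy, Real.log_div hφ0.ne' hnt0.ne', Real.log_mul hN0.ne' ht0.ne']
        ring
      have h7 : nR * Real.log nR = (m:ℝ) * Real.log nR + Real.log nR := by rw [hnR]; ring
      rw [hly]
      linarith only [hkey, h7]
    rw [hDval]
    calc |r - (m:ℝ) * Real.log y| ≤ |r| + |(m:ℝ) * Real.log y| := abs_sub _ _
      _ = |r| + (m:ℝ) * |Real.log y| := by rw [abs_mul, abs_of_nonneg hm0]
      _ ≤ C1/t + (m:ℝ) * (2 * C2 * Real.log t / t) := by
          have h9 := mul_le_mul_of_nonneg_left hlogy hm0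
          linarith only [hrfine, h9]
      _ = (C1 + (m:ℝ) * (2 * C2 * Real.log t)) / t := by ring
      _ ≤ ((C1 + 2*(m:ℝ)*C2) * Real.log t) / t :=
          (div_le_div_iff_of_pos_right ht0).mpr (by linarith only [mul_le_mul_of_nonneg_left hlt1 hC1nn])
      _ = Cf * (Real.log t / t) := by rw [hCf]; ring
  -- conclusions
  have hO : (fun t => φ t - (nR * t - (m:ℝ) * Real.log t - nR * Real.log nR))
      =O[atTop] (fun t => Real.log t / t) := by
    rw [isBigO_iff]
    refine ⟨Cf, ?_⟩
    filter_upwards [hmain] with t ht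
    rw [Real.norm_eq_abs, Real.norm_eq_abs,
      abs_of_nonneg (div_nonneg (by linarith [ht.2.1]) ht.2.2.le)]
    exact ht.1
  have heqfun : (fun t => φ t - (((m+1:ℕ) : ℝ) * t - (((m+1:ℕ) : ℝ) - 1) * Real.log t
      - ((m+1:ℕ) : ℝ) * Real.log ((m+1:ℕ) : ℝ)))
      = (fun t => φ t - (nR * t - (m:ℝ) * Real.log t - nR * Real.log nR)) := by
    funext t; rw [hcast, hnR]; push_cast; ring
  constructor
  · rw [heqfun]; exact hO
  · have hlt0 : Tendsto (fun t:ℝ => Real.log t / t) atTop (nhds 0) :=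
      hlito.tendsto_div_nhds_zero
    have hD0 : Tendsto (fun t => φ t - (nR*t - (m:ℝ)*Real.log t - nR*Real.log nR))
        atTop (nhds 0) := hO.trans_tendsto hlt0
    have h1t : Tendsto (fun t:ℝ => t⁻¹) atTop (nhds 0) := tendsto_inv_atTop_zero
    have hcomb : Tendsto (fun t => (φ t - (nR*t - (m:ℝ)*Real.log t - nR*Real.log nR)) * t⁻¹
        + (nR - (m:ℝ) * (Real.log t / t) - nR * Real.log nR * t⁻¹)) atTop
        (nhds (0 * 0 + (nR - (m:ℝ) * 0 - nR * Real.log nR * 0))) :=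
      (hD0.mul h1t).add ((tendsto_const_nhds.sub (hlt0.const_mul _)).sub (h1t.const_mul _))
    have hcomb' : Tendsto (fun t => (φ t - (nR*t - (m:ℝ)*Real.log t - nR*Real.log nR)) * t⁻¹
        + (nR - (m:ℝ) * (Real.log t / t) - nR * Real.log nR * t⁻¹)) atTop (nhds nR) := by
      convert hcomb using 2; ring
    rw [hcast]
    refine Tendsto.congr' ?_ hcomb'
    filter_upwards [eventually_gt_atTop (0:ℝ)] with t ht
    field_simp; ring
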